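/- The kernel L(z,w;η) associated with a stable polynomial p of degree (n,m) satisfies the symmetry L(z,w;η) = z^{2n} (w η̄)^{m−1} conj(L(1/z̄, 1/w̄; 1/η̄)); equivalently, writing L(z,w;η) = Σ_{j=0}^{m−1} a_j(z,w) η̄^j, one has a_k = ã_{m−1−k}, where ã_j(z,w) = z^{2n} w^{m−1} conj(a_j(1/z̄,1/w̄)). -/

import Mathlib

open Complex MeasureTheory Finset
open scoped ComplexInnerProductSpace

noncomputable section

/-- Evaluation of a bivariate polynomial with coefficient array `c i j`,
supported on `0 ≤ i ≤ n`, `0 ≤ j ≤ m`. -/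
def evalP (n m : ℕ) (c : ℕ → ℕ → ℂ) (z w : ℂ) : ℂ :=
  ∑ i ∈ Finset.range (n + 1), ∑ j ∈ Finset.range (m + 1), c i j * z ^ i * w ^ j

/-- `p` is stable: nonvanishing on the closed bidisk. -/
def Stable (n m : ℕ) (c : ℕ → ℕ → ℂ) : Prop :=
  ∀ z w : ℂ, ‖z‖ ≤ 1 → ‖w‖ ≤ 1 → evalP n m c z w ≠ 0

/-- `p` has degree exactly `n` in `z` and `m` in `w`. -/
def DegreeNM (n m : ℕ) (c : ℕ → ℕ → ℂ) : Prop :=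
  (∃ j, c n j ≠ 0) ∧ (∃ i, c i m ≠ 0)

/-- Coefficients of the reflected polynomial `p̃(z,w) = zⁿ wᵐ conj (p (1/z̄, 1/w̄))`. -/
def reflC (n m : ℕ) (c : ℕ → ℕ → ℂ) : ℕ → ℕ → ℂ :=
  fun i j => star (c (n - i) (m - j))

/-- The Laurent monomial `z^i w^j` as a function on the torus, `z = e^{iθ}`, `w = e^{iφ}`. -/
def tmono (i j : ℤ) : ℝ → ℝ → ℂ :=
  fun θ φ => Complex.exp (((i : ℂ) * (θ : ℂ) + (j : ℂ) * (φ : ℂ)) * Complex.I)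

/-- A bivariate polynomial as a function on the torus. -/
def onT (n m : ℕ) (c : ℕ → ℕ → ℂ) : ℝ → ℝ → ℂ :=
  fun θ φ => evalP n m c (Complex.exp ((θ : ℂ) * Complex.I)) (Complex.exp ((φ : ℂ) * Complex.I))

/-- The inner product `⟨f,g⟩ = ∫_{𝕋²} f ḡ dσ/|p|²` of `L²(dσ/|p|²)`. -/
def ip (n m : ℕ) (c : ℕ → ℕ → ℂ) (f g : ℝ → ℝ → ℂ) : ℂ :=
  (1 / (2 * Real.pi) ^ 2 : ℂ) *
    ∫ θ in (0 : ℝ)..(2 * Real.pi), ∫ φ in (0 : ℝ)..(2 * Real.pi),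
      f θ φ * star (g θ φ) / ((Complex.normSq (onT n m c θ φ) : ℝ) : ℂ)

/-- Numerator of the Christoffel–Darboux-type kernel `L`:
`zⁿ (p(z,w) conj(p(1/z̄,η)) − p̃(z,w) conj(p̃(1/z̄,η)))`. -/
def Lnum (n m : ℕ) (c : ℕ → ℕ → ℂ) (z w η : ℂ) : ℂ :=
  z ^ n * (evalP n m c z w * star (evalP n m c (star z)⁻¹ η)
    - evalP n m (reflC n m c) z w * star (evalP n m (reflC n m c) (star z)⁻¹ η))

/-- The kernel built from coefficient arrays `a k` for the polynomials `a_k(z,w)`: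
`L(z,w;η) = Σ_{k<m} a_k(z,w) η̄^k`. -/
def Lsum (n m : ℕ) (a : ℕ → ℕ → ℕ → ℂ) (z w η : ℂ) : ℂ :=
  ∑ k ∈ Finset.range m, evalP (2 * n) (m - 1) (a k) z w * (star η) ^ k

/-- `a` is the coefficient array of the kernel `L` associated with `p`:
`(1 - w η̄) L(z,w;η) = Lnum(z,w;η)` for all `z ≠ 0`. -/
def IsLCoeff (n m : ℕ) (c : ℕ → ℕ → ℂ) (a : ℕ → ℕ → ℕ → ℂ) : Prop :=
  ∀ z w η : ℂ, z ≠ 0 → (1 - w * star η) * Lsum n m a z w η = Lnum n m c z w η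

end

lemma refl_eval (n m : ℕ) (c : ℕ → ℕ → ℂ) (z w : ℂ) (hz : z ≠ 0) (hw : w ≠ 0) :
    evalP n m (reflC n m c) z w
      = z ^ n * w ^ m * star (evalP n m c (star z)⁻¹ (star w)⁻¹) := by
  unfold evalP reflC
  rw [show (∑ i ∈ Finset.range (n + 1), ∑ j ∈ Finset.range (m + 1),
        star (c (n - i) (m - j)) * z ^ i * w ^ j)
      = ∑ i ∈ Finset.range (n + 1), ∑ j ∈ Finset.range (m + 1),
        star (c (n - (n - i)) (m - (m - j))) * z ^ (n - i) * w ^ (m - j) by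
    rw [← Finset.sum_range_reflect]
    refine Finset.sum_congr rfl fun i hi => ?_
    rw [← Finset.sum_range_reflect]
    refine Finset.sum_congr rfl fun j hj => ?_
    simp [Nat.succ_sub_succ] ]
  rw [star_sum, Finset.mul_sum]
  refine Finset.sum_congr rfl fun i hi => ?_
  rw [star_sum, Finset.mul_sum]
  refine Finset.sum_congr rfl fun j hj => ?_
  have hi' : i ≤ n := Nat.lt_succ_iff.mp (Finset.mem_range.mp hi)
  have hj' : j ≤ m := Nat.lt_succ_iff.mp (Finset.mem_range.mp hj)
  rw [Nat.sub_sub_self hi', Nat.sub_sub_self hj', pow_sub₀ z hz hi', pow_sub₀ w hw hj']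
  simp [star_mul, star_pow, mul_comm, mul_assoc, mul_left_comm]

lemma Lnum_symm (n m : ℕ) (c : ℕ → ℕ → ℂ) (z w η : ℂ)
    (hz : z ≠ 0) (hw : w ≠ 0) (hη : η ≠ 0) :
    Lnum n m c z w η
      = - (z ^ (2 * n) * (w * star η) ^ m *
          star (Lnum n m c (star z)⁻¹ (star w)⁻¹ (star η)⁻¹)) := by
  have hz' : star z ≠ 0 := star_ne_zero.mpr hz
  have hw' : star w ≠ 0 := star_ne_zero.mpr hw
  have hη' : star η ≠ 0 := star_ne_zero.mpr hη
  have hZ : (star z)⁻¹ ≠ 0 := inv_ne_zero hz'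
  have hW : (star w)⁻¹ ≠ 0 := inv_ne_zero hw'
  have hH : (star η)⁻¹ ≠ 0 := inv_ne_zero hη'
  have eZ : (star (star z)⁻¹)⁻¹ = z := by simp
  have eW : (star (star w)⁻¹)⁻¹ = w := by simp
  have eH : (star (star η)⁻¹)⁻¹ = η := by simp
  have h1 : evalP n m (reflC n m c) z w
      = z ^ n * w ^ m * star (evalP n m c (star z)⁻¹ (star w)⁻¹) :=
    refl_eval n m c z w hz hw
  have h2 : evalP n m (reflC n m c) (star z)⁻¹ η
      = ((star z)⁻¹) ^ n * η ^ m * star (evalP n m c z (star η)⁻¹) := by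
    rw [refl_eval n m c _ η hZ hη, eZ]
  have h3 : evalP n m (reflC n m c) (star z)⁻¹ (star w)⁻¹
      = ((star z)⁻¹) ^ n * ((star w)⁻¹) ^ m * star (evalP n m c z w) := by
    rw [refl_eval n m c _ _ hZ hW, eZ, eW]
  have h4 : evalP n m (reflC n m c) z (star η)⁻¹
      = z ^ n * ((star η)⁻¹) ^ m * star (evalP n m c (star z)⁻¹ η) := by
    rw [refl_eval n m c z _ hz hH, eH]
  unfold Lnum
  rw [eZ, h1, h2, h3, h4]
  simp only [star_mul, star_sub, star_pow, star_inv, star_star]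
  rw [two_mul, pow_add]
  simp only [Complex.star_def, map_div₀, map_inv₀, map_one, Complex.conj_conj]
  field_simp
  have cz : z ^ (n*3) * z⁻¹ ^ n = z ^ (n*2) := by
    rw [inv_pow, show n*3 = n*2+n by ring, pow_add, mul_assoc,
      mul_inv_cancel₀ (pow_ne_zero _ hz), mul_one]
  have cw : w ^ m * w⁻¹ ^ m = 1 := by
    rw [← mul_pow, mul_inv_cancel₀ hw, one_pow]
  have cs : ((starRingEnd ℂ) η) ^ m * ((starRingEnd ℂ) η)⁻¹ ^ m = 1 := by
    have hη'' : (starRingEnd ℂ) η ≠ 0 := hη'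
    rw [← mul_pow, mul_inv_cancel₀ hη'', one_pow]
  have cz2 : z ^ (n*2) * z⁻¹ ^ (n*2) = 1 := by
    rw [← mul_pow, mul_inv_cancel₀ hz, one_pow]
  linear_combination
    (-(evalP n m c z w * (starRingEnd ℂ) (evalP n m c (1 / (starRingEnd ℂ) z) η)) * (w ^ m * w⁻¹ ^ m) * ((starRingEnd ℂ) η ^ m * ((starRingEnd ℂ) η)⁻¹ ^ m)) * cz2 + (-(evalP n m c z w * (starRingEnd ℂ) (evalP n m c (1 / (starRingEnd ℂ) z) η)) * ((starRingEnd ℂ) η ^ m * ((starRingEnd ℂ) η)⁻¹ ^ m)) * cw + (-(evalP n m c z w * (starRingEnd ℂ) (evalP n m c (1 / (starRingEnd ℂ) z) η))) * cs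

lemma rhs_expand (n m : ℕ) (a : ℕ → ℕ → ℕ → ℂ) (z w η : ℂ)
    (hη : η ≠ 0) (hm : 1 ≤ m) :
    z ^ (2*n) * (w * star η) ^ (m-1) * star (Lsum n m a (star z)⁻¹ (star w)⁻¹ (star η)⁻¹)
      = ∑ k ∈ Finset.range m,
          (z ^ (2*n) * w ^ (m-1) *
            star (evalP (2*n) (m-1) (a (m-1-k)) (star z)⁻¹ (star w)⁻¹)) * (star η) ^ k := by
  have hs : star η ≠ 0 := star_ne_zero.mpr hη
  unfold Lsum
  rw [star_sum, Finset.mul_sum,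
    ← Finset.sum_range_reflect (fun k => (z ^ (2*n) * w ^ (m-1) *
      star (evalP (2*n) (m-1) (a (m-1-k)) (star z)⁻¹ (star w)⁻¹)) * (star η) ^ k) m]
  refine Finset.sum_congr rfl fun k hk => ?_
  have hk' : k ≤ m - 1 := Nat.le_pred_of_lt (Finset.mem_range.mp hk)
  have hmm : m - 1 - (m - 1 - k) = k := Nat.sub_sub_self hk'
  simp only [hmm, star_mul, star_pow, star_inv, star_star]
  rw [pow_sub₀ (star η) hs hk', mul_pow, inv_pow]
  ring

lemma key_eq (n m : ℕ) (c : ℕ → ℕ → ℂ) (a : ℕ → ℕ → ℕ → ℂ) (ha : IsLCoeff n m c a)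
    (hm : 1 ≤ m) (z w η : ℂ) (hz : z ≠ 0) (hw : w ≠ 0) (hη : η ≠ 0) :
    (1 - w * star η) * Lsum n m a z w η
      = (1 - w * star η) *
        ∑ k ∈ Finset.range m,
          (z ^ (2*n) * w ^ (m-1) *
            star (evalP (2*n) (m-1) (a (m-1-k)) (star z)⁻¹ (star w)⁻¹)) * (star η) ^ k := by
  have hz' : star z ≠ 0 := star_ne_zero.mpr hz
  have hw' : star w ≠ 0 := star_ne_zero.mpr hw
  have hs : star η ≠ 0 := star_ne_zero.mpr hη
  have hZ : (star z)⁻¹ ≠ 0 := inv_ne_zero hz'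
  rw [ha z w η hz, Lnum_symm n m c z w η hz hw hη,
    ← ha (star z)⁻¹ (star w)⁻¹ (star η)⁻¹ hZ,
    ← rhs_expand n m a z w η hη hm]
  simp only [star_mul, star_sub, star_one, star_inv, star_star]
  have hp : (w * star η) ^ m = (w * star η) ^ (m-1) * (w * star η) := by
    rw [← pow_succ]
    congr 1
    omega
  rw [hp]
  simp only [Complex.star_def, map_div₀, map_inv₀, map_one, Complex.conj_conj]
  field_simp
  simp only [one_div]
  have cw : w * w⁻¹ = 1 := mul_inv_cancel₀ hw
  have hs'' : (starRingEnd ℂ) η ≠ 0 := hs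
  have cs : (starRingEnd ℂ) η * ((starRingEnd ℂ) η)⁻¹ = 1 := mul_inv_cancel₀ hs''
  set T := (starRingEnd ℂ) (Lsum n m a ((starRingEnd ℂ) z)⁻¹ ((starRingEnd ℂ) w)⁻¹ ((starRingEnd ℂ) η)⁻¹) with hT
  set K := z ^ (n*2) * w ^ (m-1) * ((starRingEnd ℂ) η) ^ (m-1) * T with hK
  linear_combination (w ^ (m-1) * ((starRingEnd ℂ) η) ^ (m-1) * T) * cs

lemma part2_lem (n m : ℕ) (c : ℕ → ℕ → ℂ) (a : ℕ → ℕ → ℕ → ℂ) (ha : IsLCoeff n m c a)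
    (k : ℕ) (hk : k < m) (z w : ℂ) (hz : z ≠ 0) (hw : w ≠ 0) :
    evalP (2 * n) (m - 1) (a k) z w
      = z ^ (2 * n) * w ^ (m - 1) *
          star (evalP (2 * n) (m - 1) (a (m - 1 - k)) (star z)⁻¹ (star w)⁻¹) := by
  have hm : 1 ≤ m := by omega
  set d : ℕ → ℂ := fun j => evalP (2*n) (m-1) (a j) z w
      - z ^ (2*n) * w ^ (m-1) * star (evalP (2*n) (m-1) (a (m-1-j)) (star z)⁻¹ (star w)⁻¹)
    with hd
  set P : Polynomial ℂ := ∑ j ∈ Finset.range m, Polynomial.C (d j) * Polynomial.X ^ j with hP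
  have heval : ∀ s : ℂ, s ≠ 0 → w * s ≠ 1 → P.eval s = 0 := by
    intro s hs hws
    have hη : (star s : ℂ) ≠ 0 := star_ne_zero.mpr hs
    have h := key_eq n m c a ha hm z w (star s) hz hw hη
    rw [star_star] at h
    have hne : (1 : ℂ) - w * s ≠ 0 := sub_ne_zero.mpr (Ne.symm hws)
    have h2 := mul_left_cancel₀ hne h
    have hPe : P.eval s = Lsum n m a z w (star s)
        - ∑ j ∈ Finset.range m, (z ^ (2*n) * w ^ (m-1) *
            star (evalP (2*n) (m-1) (a (m-1-j)) (star z)⁻¹ (star w)⁻¹)) * s ^ j := by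
      rw [hP, Polynomial.eval_finset_sum]
      unfold Lsum
      rw [← Finset.sum_sub_distrib]
      refine Finset.sum_congr rfl fun j hj => ?_
      simp [hd, sub_mul, star_star]
    rw [hPe, h2, sub_self]
  have hroots : {x : ℂ | P.IsRoot x}.Infinite := by
    apply Set.Infinite.mono (s := (({0, w⁻¹} : Set ℂ))ᶜ)
    · intro x hx
      simp only [Set.mem_compl_iff, Set.mem_insert_iff, Set.mem_singleton_iff, not_or] at hx
      exact heval x hx.1 (fun h1 => hx.2 (inv_eq_of_mul_eq_one_right h1).symm)
    · exact Set.Finite.infinite_compl ((Set.finite_singleton _).insert _)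
  have hP0 : P = 0 := Polynomial.eq_zero_of_infinite_isRoot P hroots
  have hco : P.coeff k = d k := by
    rw [hP, Polynomial.finset_sum_coeff]
    simp only [Polynomial.coeff_C_mul, Polynomial.coeff_X_pow]
    rw [Finset.sum_eq_single k]
    · simp
    · intro j hj hjk
      simp [Ne.symm hjk]
    · intro hkk
      exact absurd (Finset.mem_range.mpr hk) hkk
  have : d k = 0 := by rw [← hco, hP0, Polynomial.coeff_zero]
  have := sub_eq_zero.mp this
  simpa [hd] using this


/-- Symmetry of the kernel: L(z,w;η) = z^{2n} (wη̄)^{m-1} conj(L(1/z̄,1/w̄;1/η̄)),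
equivalently a_k = ã_{m-1-k}. -/
theorem statement4 (n m : ℕ) (c : ℕ → ℕ → ℂ)
    (hstable : Stable n m c) (hdeg : DegreeNM n m c)
    (a : ℕ → ℕ → ℕ → ℂ) (ha : IsLCoeff n m c a) :
    (∀ z w η : ℂ, z ≠ 0 → w ≠ 0 → η ≠ 0 →
      Lsum n m a z w η
        = z ^ (2 * n) * (w * star η) ^ (m - 1) *
            star (Lsum n m a (star z)⁻¹ (star w)⁻¹ (star η)⁻¹)) ∧
    (∀ k : ℕ, k < m → ∀ z w : ℂ, z ≠ 0 → w ≠ 0 →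
      evalP (2 * n) (m - 1) (a k) z w
        = z ^ (2 * n) * w ^ (m - 1) *
            star (evalP (2 * n) (m - 1) (a (m - 1 - k)) (star z)⁻¹ (star w)⁻¹)) := by
  constructor
  · intro z w η hz hw hη
    rcases Nat.eq_zero_or_pos m with hm0 | hm
    · subst hm0
      simp [Lsum]
    · rw [rhs_expand n m a z w η hη hm]
      unfold Lsum
      refine Finset.sum_congr rfl fun k hk => ?_
      rw [part2_lem n m c a ha k (Finset.mem_range.mp hk) z w hz hw]
  · exact fun k hk z w hz hw => part2_lem n m c a ha k hk z w hz hw
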